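/- A group G endowed with a coarse structure E is a coarse group if and only if there exists an invariant group ideal I on G such that E = E_I. -/

import Mathlib

/-- A *coarse structure* on `X`: every entourage contains the diagonal, and the family
is closed under composition, inversion, and passing to subsets containing the diagonal. -/
def IsCoarseStructure {X : Type*} (E : Set (Set (X × X))) : Prop :=
  (∀ ε ∈ E, ∀ x : X, (x, x) ∈ ε) ∧
  (∀ ε ∈ E, ∀ δ ∈ E, {p : X × X | ∃ z : X, (p.1, z) ∈ ε ∧ (z, p.2) ∈ δ} ∈ E) ∧
  (∀ ε ∈ E, {p : X × X | (p.2, p.1) ∈ ε} ∈ E) ∧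
  (∀ ε ∈ E, ∀ ε' ⊆ ε, (∀ x : X, (x, x) ∈ ε') → ε' ∈ E)

/-- A family `I` of subsets of a group `G` is a *group ideal*. -/
def IsGroupIdeal {G : Type*} [Group G] (I : Set (Set G)) : Prop :=
  (∀ A ∈ I, ∀ B ⊆ A, B ∈ I) ∧
  (∀ A ∈ I, ∀ B ∈ I, A ∪ B ∈ I) ∧
  (∀ A : Set G, A.Finite → A ∈ I) ∧
  (∀ A ∈ I, ∀ B ∈ I, {x : G | ∃ a ∈ A, ∃ b ∈ B, x = a * b⁻¹} ∈ I)

/-- The entourage `ε_A = {(x, g•x) : x ∈ X, g ∈ A}` determined by `A ⊆ G`. -/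
def entourageOf {G X : Type*} [Group G] [MulAction G X] (A : Set G) : Set (X × X) :=
  {p : X × X | ∃ g ∈ A, p.2 = g • p.1}

/-- The coarse structure `E(G, I, X)` induced on a `G`-space `X` by a group ideal `I`:
all diagonal-containing subsets of some `ε_A` with `A ∈ I`, `1 ∈ A`. -/
def actionCoarse (G : Type*) [Group G] (I : Set (Set G)) (X : Type*) [MulAction G X] :
    Set (Set (X × X)) :=
  {ε | (∀ x : X, (x, x) ∈ ε) ∧ ∃ A ∈ I, (1 : G) ∈ A ∧ ε ⊆ entourageOf A}

/-- `E_I`: the coarse structure on `G` induced by the left action of `G` on itself. -/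
def idealCoarse {G : Type*} [Group G] (I : Set (Set G)) : Set (Set (G × G)) :=
  actionCoarse G I G

/-- The ball `B(x, ε)`. -/
def ball {X : Type*} (ε : Set (X × X)) (x : X) : Set X := {y : X | (x, y) ∈ ε}


/-- `f` is a *coarse (bornologous) mapping* from `(X, EX)` to `(Y, EY)`. -/
def IsCoarseMap {X Y : Type*} (EX : Set (Set (X × X))) (EY : Set (Set (Y × Y)))
    (f : X → Y) : Prop :=
  ∀ ε ∈ EX, ∃ δ ∈ EY, ∀ p ∈ ε, (f p.1, f p.2) ∈ δ

/-- The product coarse structure on `X × Y`, with base the componentwise products of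
entourages. -/
def prodCoarse {X Y : Type*} (EX : Set (Set (X × X))) (EY : Set (Set (Y × Y))) :
    Set (Set ((X × Y) × (X × Y))) :=
  {η | (∀ q : X × Y, (q, q) ∈ η) ∧ ∃ ε ∈ EX, ∃ δ ∈ EY,
    η ⊆ {p : (X × Y) × (X × Y) | (p.1.1, p.2.1) ∈ ε ∧ (p.1.2, p.2.2) ∈ δ}}

/-- `(G, E)` is a *coarse group*: the multiplication and inversion are coarse maps. -/
def IsCoarseGroup {G : Type*} [Group G] (E : Set (Set (G × G))) : Prop :=
  IsCoarseMap (prodCoarse E E) E (fun p => p.1 * p.2) ∧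
  IsCoarseMap E E (fun x : G => x⁻¹)

/-- `(G, E)` is a *left coarse group*. -/
def IsLeftCoarseGroup {G : Type*} [Group G] (E : Set (Set (G × G))) : Prop :=
  ∀ ε ∈ E, ∃ ε' ∈ E, ∀ g x y : G, (x, y) ∈ ε → (g * x, g * y) ∈ ε'

/-- `(G, E)` is a *right coarse group*. -/
def IsRightCoarseGroup {G : Type*} [Group G] (E : Set (Set (G × G))) : Prop :=
  ∀ ε ∈ E, ∃ ε' ∈ E, ∀ g x y : G, (x, y) ∈ ε → (x * g, y * g) ∈ ε'

/-- A coarse structure is *connected* if any two points are related by some entourage. -/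
def IsConnectedCoarse {X : Type*} (E : Set (Set (X × X))) : Prop :=
  ∀ x y : X, ∃ ε ∈ E, (x, y) ∈ ε

/-- A group ideal `I` is *invariant* if `⋃_{g ∈ G} g⁻¹ A g ∈ I` for each `A ∈ I`. -/
def IsInvariantIdeal {G : Type*} [Group G] (I : Set (Set G)) : Prop :=
  ∀ A ∈ I, {x : G | ∃ g : G, ∃ a ∈ A, x = g⁻¹ * a * g} ∈ I

/-- A group `G` endowed with a (connected) coarse structure `E` is a coarse group
if and only if `E = E_I` for some invariant group ideal `I` on `G`. -/
theorem isCoarseGroup_iff_exists_invariant_ideal {G : Type*} [Group G]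
    (E : Set (Set (G × G))) (hE : IsCoarseStructure E) (hc : IsConnectedCoarse E) :
    IsCoarseGroup E ↔
      ∃ I : Set (Set G), IsGroupIdeal I ∧ IsInvariantIdeal I ∧ E = idealCoarse I := by
  obtain ⟨hdiag, hcomp, hsymm, hsub⟩ := hE
  -- the union of two entourages is an entourage
  have hunion : ∀ ε ∈ E, ∀ δ ∈ E, ε ∪ δ ∈ E := by
    intro ε hε δ hδ
    refine hsub _ (hcomp ε hε δ hδ) _ ?_ ?_
    · rintro ⟨x, y⟩ (h | h)
      · exact ⟨y, h, hdiag δ hδ y⟩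
      · exact ⟨x, hdiag ε hε x, h⟩
    · intro x; exact Or.inl (hdiag ε hε x)
  -- the diagonal is an entourage
  have hΔ : {p : G × G | p.1 = p.2} ∈ E := by
    obtain ⟨ε, hε, -⟩ := hc 1 1
    refine hsub ε hε _ ?_ ?_
    · rintro ⟨x, y⟩ (h : x = y); subst h; exact hdiag ε hε x
    · intro x; rfl
  constructor
  · rintro ⟨hmul, hinv⟩
    -- right translations are uniformly coarse
    have hright : ∀ ε ∈ E, ∃ ε' ∈ E, ∀ g x y : G, (x, y) ∈ ε → (x * g, y * g) ∈ ε' := by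
      intro ε hε
      have hη : {p : (G × G) × (G × G) | (p.1.1, p.2.1) ∈ ε ∧ p.1.2 = p.2.2}
          ∈ prodCoarse E E := by
        refine ⟨fun q => ⟨hdiag ε hε q.1, rfl⟩, ε, hε, _, hΔ, ?_⟩
        rintro ⟨⟨x, g⟩, ⟨y, g'⟩⟩ ⟨h1, h2⟩; exact ⟨h1, h2⟩
      obtain ⟨ε', hε', hcov⟩ := hmul _ hη
      exact ⟨ε', hε', fun g x y h => hcov ((x, g), (y, g)) ⟨h, rfl⟩⟩
    -- left translations are uniformly coarse
    have hleft : ∀ ε ∈ E, ∃ ε' ∈ E, ∀ g x y : G, (x, y) ∈ ε → (g * x, g * y) ∈ ε' := by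
      intro ε hε
      have hη : {p : (G × G) × (G × G) | p.1.1 = p.2.1 ∧ (p.1.2, p.2.2) ∈ ε}
          ∈ prodCoarse E E := by
        refine ⟨fun q => ⟨rfl, hdiag ε hε q.2⟩, _, hΔ, ε, hε, ?_⟩
        rintro ⟨⟨g, x⟩, ⟨g', y⟩⟩ ⟨h1, h2⟩; exact ⟨h1, h2⟩
      obtain ⟨ε', hε', hcov⟩ := hmul _ hη
      exact ⟨ε', hε', fun g x y h => hcov ((g, x), (g, y)) ⟨rfl, h⟩⟩
    -- the candidate ideal
    set I : Set (Set G) := {A : Set G | ∃ ε ∈ E, ∀ a ∈ A, ((1 : G), a) ∈ ε} with hI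
    -- inverses of small sets are small
    have hIinv : ∀ A ∈ I, {x : G | ∃ a ∈ A, x = a⁻¹} ∈ I := by
      rintro A ⟨ε, hε, hA⟩
      have hε1 : {p : G × G | (p.2, p.1) ∈ ε} ∈ E := hsymm ε hε
      obtain ⟨δ, hδ, hcov⟩ := hinv _ hε1
      refine ⟨{p : G × G | (p.2, p.1) ∈ δ}, hsymm δ hδ, ?_⟩
      rintro x ⟨a, ha, rfl⟩
      have := hcov (a, 1) (hA a ha)
      simpa using this
    refine ⟨I, ⟨?_, ?_, ?_, ?_⟩, ?_, ?_⟩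
    · -- downward closed
      rintro A ⟨ε, hε, hA⟩ B hBA
      exact ⟨ε, hε, fun a ha => hA a (hBA ha)⟩
    · -- unions
      rintro A ⟨ε, hε, hA⟩ B ⟨δ, hδ, hB⟩
      refine ⟨ε ∪ δ, hunion ε hε δ hδ, ?_⟩
      rintro a (ha | ha)
      · exact Or.inl (hA a ha)
      · exact Or.inr (hB a ha)
    · -- finite sets
      intro A hA
      refine Set.Finite.induction_on (motive := fun s _ => s ∈ I) A hA ⟨_, hΔ, by simp⟩ ?_
      rintro a s - - ⟨ε, hε, hs⟩
      obtain ⟨δ, hδ, hδa⟩ := hc 1 a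
      refine ⟨ε ∪ δ, hunion ε hε δ hδ, ?_⟩
      rintro b (hb | hb)
      · exact hb ▸ Or.inr hδa
      · exact Or.inl (hs b hb)
    · -- products A * B⁻¹
      rintro A ⟨ε, hε, hA⟩ B hB
      obtain ⟨δ, hδ, hBinv⟩ := hIinv B hB
      have hη : {p : (G × G) × (G × G) | (p.1.1, p.2.1) ∈ ε ∧ (p.1.2, p.2.2) ∈ δ}
          ∈ prodCoarse E E := by
        exact ⟨fun q => ⟨hdiag ε hε q.1, hdiag δ hδ q.2⟩, ε, hε, δ, hδ, fun p hp => hp⟩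
      obtain ⟨μ, hμ, hcov⟩ := hmul _ hη
      refine ⟨μ, hμ, ?_⟩
      rintro x ⟨a, ha, b, hb, rfl⟩
      have h1 : ((1 : G), a) ∈ ε := hA a ha
      have h2 : ((1 : G), b⁻¹) ∈ δ := hBinv b⁻¹ ⟨b, hb, rfl⟩
      have := hcov ((1, 1), (a, b⁻¹)) ⟨h1, h2⟩
      simpa using this
    · -- invariance
      rintro A ⟨ε, hε, hA⟩
      obtain ⟨ε', hε', hr⟩ := hright ε hε
      obtain ⟨ε'', hε'', hl⟩ := hleft ε' hε'
      refine ⟨ε'', hε'', ?_⟩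
      rintro x ⟨g, a, ha, rfl⟩
      have h1 : ((1 : G) * g, a * g) ∈ ε' := hr g 1 a (hA a ha)
      have h2 := hl g⁻¹ _ _ h1
      simpa [mul_assoc] using h2
    · -- E = E_I
      ext ε
      constructor
      · intro hε
        obtain ⟨ε', hε', hr⟩ := hright ε hε
        refine ⟨hdiag ε hε, {z : G | ∃ x y : G, (x, y) ∈ ε ∧ z = y * x⁻¹}, ?_, ?_, ?_⟩
        · refine ⟨ε', hε', ?_⟩
          rintro z ⟨x, y, hxy, rfl⟩
          have := hr x⁻¹ x y hxy
          simpa using this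
        · exact ⟨1, 1, hdiag ε hε 1, by simp⟩
        · rintro ⟨x, y⟩ hxy
          exact ⟨y * x⁻¹, ⟨x, y, hxy, rfl⟩, by simp [smul_eq_mul]⟩
      · rintro ⟨hd, A, ⟨μ, hμ, hAμ⟩, -, hsubA⟩
        obtain ⟨μ', hμ', hr⟩ := hright μ hμ
        refine hsub μ' hμ' ε ?_ hd
        rintro ⟨x, y⟩ hxy
        obtain ⟨a, haA, hy⟩ := hsubA hxy
        have := hr x 1 a (hAμ a haA)
        have hy' : y = a * x := hy
        subst hy'
        simpa using this
  · rintro ⟨I, ⟨hsubI, -, hfinI, hmulI⟩, hinvI, rfl⟩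
    have h1I : {(1 : G)} ∈ I := hfinI _ (Set.finite_singleton 1)
    have hIinv : ∀ A ∈ I, {x : G | ∃ a ∈ A, x = a⁻¹} ∈ I := by
      intro A hA
      refine hsubI _ (hmulI _ h1I _ hA) _ ?_
      rintro x ⟨a, ha, rfl⟩
      exact ⟨1, rfl, a, ha, (one_mul _).symm⟩
    constructor
    · -- multiplication is coarse
      rintro η ⟨hηd, ε, ⟨hεd, A, hA, hA1, hεA⟩, δ, ⟨hδd, B, hB, hB1, hδB⟩, hη⟩
      set C : Set G := {x : G | ∃ g : G, ∃ b ∈ B, x = g⁻¹ * b * g} with hCdef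
      have hC : C ∈ I := hinvI B hB
      have hC1 : (1 : G) ∈ C := ⟨1, 1, hB1, by group⟩
      have hCinv : {x : G | ∃ c ∈ C, x = c⁻¹} ∈ I := hIinv C hC
      set D : Set G := {x : G | ∃ a ∈ A, ∃ b ∈ {x : G | ∃ c ∈ C, x = c⁻¹}, x = a * b⁻¹}
        with hDdef
      have hD : D ∈ I := hmulI A hA _ hCinv
      have hD1 : (1 : G) ∈ D := ⟨1, hA1, 1⁻¹, ⟨1, hC1, rfl⟩, by group⟩
      refine ⟨entourageOf D, ⟨fun x => ⟨1, hD1, by simp⟩, D, hD, hD1, fun p hp => hp⟩, ?_⟩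
      rintro ⟨⟨x, y⟩, ⟨x', y'⟩⟩ hp
      obtain ⟨h1, h2⟩ := hη hp
      obtain ⟨a, haA, hx'⟩ := hεA h1
      obtain ⟨b, hbB, hy'⟩ := hδB h2
      simp only [smul_eq_mul] at hx' hy'
      refine ⟨a * (x * b * x⁻¹), ?_, ?_⟩
      · refine ⟨a, haA, (x * b * x⁻¹)⁻¹, ⟨x * b * x⁻¹, ⟨x⁻¹, b, hbB, by group⟩, rfl⟩,
          by group⟩
      · show x' * y' = _ • (x * y)
        rw [smul_eq_mul, hx', hy']; group
    · -- inversion is coarse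
      rintro ε ⟨hεd, A, hA, hA1, hεA⟩
      have hAinv : {x : G | ∃ a ∈ A, x = a⁻¹} ∈ I := hIinv A hA
      set C : Set G := {x : G | ∃ g : G, ∃ b ∈ {x : G | ∃ a ∈ A, x = a⁻¹}, x = g⁻¹ * b * g}
        with hCdef
      have hC : C ∈ I := hinvI _ hAinv
      have hC1 : (1 : G) ∈ C := ⟨1, 1⁻¹, ⟨1, hA1, rfl⟩, by group⟩
      refine ⟨entourageOf C, ⟨fun x => ⟨1, hC1, by simp⟩, C, hC, hC1, fun p hp => hp⟩, ?_⟩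
      rintro ⟨x, y⟩ hxy
      obtain ⟨a, haA, hy⟩ := hεA hxy
      have hy' : y = a * x := hy
      refine ⟨x⁻¹ * a⁻¹ * x, ⟨x, a⁻¹, ⟨a, haA, rfl⟩, by group⟩, ?_⟩
      show y⁻¹ = _ • x⁻¹
      rw [smul_eq_mul, hy']; group
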